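/- Let c be a volatile configuration of the complete graph K_n with c(v) ≤ n−1 for every vertex v. Then there exists an ordering v₁, v₂, …, v_n of the vertices such that c(v_i) ≥ n−i for every i ∈ {1,…,n}. -/

import Mathlib

/-- Firing vertex `v` in `K_n`: remove `n-1` chips from `v`, add one chip to each other vertex. -/
def fireK (n : ℕ) (c : Fin n → ℕ) (v : Fin n) : Fin n → ℕ :=
  fun u => if u = v then c v - (n - 1) else c u + 1

/-- Configuration after firing `f 0, …, f (m-1)` in order in `K_n`. -/
def fireIterK (n : ℕ) (c : Fin n → ℕ) (f : ℕ → Fin n) : ℕ → Fin n → ℕ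
  | 0 => c
  | m + 1 => fireK n (fireIterK n c f m) (f m)

/-- A configuration of `K_n` is volatile if it admits an infinite legal firing sequence. -/
def VolatileK (n : ℕ) (c : Fin n → ℕ) : Prop :=
  ∃ f : ℕ → Fin n, ∀ m : ℕ, n - 1 ≤ fireIterK n c f m (f m)

/-- Configuration after firing a finite list of vertices in order in `K_n`. -/
def fireListK (n : ℕ) : (Fin n → ℕ) → List (Fin n) → (Fin n → ℕ)
  | c, [] => c
  | c, v :: l => fireListK n (fireK n c v) l

/-- A finite firing list in `K_n` is legal if each fired vertex has at least `n-1` chips. -/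
def LegalListK (n : ℕ) : (Fin n → ℕ) → List (Fin n) → Prop
  | _, [] => True
  | c, v :: l => n - 1 ≤ c v ∧ LegalListK n (fireK n c v) l

/-- If `u` does not fire during `[t, t+d)`, its chip count increases by exactly `d`. -/
lemma fireIter_add (n : ℕ) (c : Fin n → ℕ) (f : ℕ → Fin n) (u : Fin n) (t d : ℕ)
    (h : ∀ s, t ≤ s → s < t + d → f s ≠ u) :
    fireIterK n c f (t + d) u = fireIterK n c f t u + d := by
  induction d with
  | zero => rfl
  | succ d ih =>
    show fireK n (fireIterK n c f (t + d)) (f (t + d)) u = _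
    unfold fireK
    rw [if_neg (fun hu => h (t + d) (Nat.le_add_right _ _) (by omega) hu.symm),
      ih (fun s hs hs' => h s hs (by omega))]
    omega

/-- Key lemma: as long as some vertex `w` has never fired, all firings are distinct. -/
lemma keyA (n : ℕ) (c : Fin n → ℕ) (f : ℕ → Fin n)
    (hc : ∀ v, c v ≤ n - 1) (hleg : ∀ m, n - 1 ≤ fireIterK n c f m (f m)) :
    ∀ s2 : ℕ, ∀ w : Fin n, (∀ s ≤ s2, f s ≠ w) → ∀ s1 < s2, f s1 ≠ f s2 := by
  intro s2
  induction s2 using Nat.strong_induction_on with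
  | _ s2 ih =>
  intro w hw s1 hs1 heq
  -- injectivity strictly below s2
  have hinj : ∀ a b, a < b → b < s2 → f a ≠ f b := fun a b hab hb =>
    ih b hb w (fun s hs => hw s (le_of_lt (lt_of_le_of_lt hs hb))) a hab
  -- `s2 ≤ n - 1` since the firings before `s2` are distinct and avoid `w`
  have hcard : s2 ≤ n - 1 := by
    have h1 : (Finset.range s2).card ≤ (Finset.univ.erase w).card := by
      apply Finset.card_le_card_of_injOn f
      · intro s hs
        simp only [Finset.mem_coe, Finset.mem_range] at hs
        exact Finset.mem_erase.mpr ⟨hw s (le_of_lt hs), Finset.mem_univ _⟩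
      · intro a ha b hb hab
        simp only [Finset.coe_range, Set.mem_Iio] at ha hb
        by_contra hne
        rcases Nat.lt_or_ge a b with h | h
        · exact hinj a b h hb hab
        · exact hinj b a (by omega) ha hab.symm
    simpa [Finset.card_univ] using h1
  set u := f s1 with hu
  -- u did not fire before s1
  have hbefore : ∀ s, 0 ≤ s → s < 0 + s1 → f s ≠ u := by
    intro s _ hs
    exact hinj s s1 (by omega) hs1
  have e1 : fireIterK n c f s1 u = c u + s1 := by
    have := fireIter_add n c f u 0 s1 hbefore
    simpa [fireIterK] using this
  have hV1 : n - 1 ≤ fireIterK n c f s1 u := hleg s1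
  have e2 : fireIterK n c f (s1 + 1) u = fireIterK n c f s1 u - (n - 1) := by
    show fireK n (fireIterK n c f s1) (f s1) u = _
    unfold fireK
    rw [if_pos rfl]
  have hmid : ∀ s, s1 + 1 ≤ s → s < (s1 + 1) + (s2 - (s1 + 1)) → f s ≠ u := by
    intro s hs hs' hfu
    exact hinj s1 s (by omega) (by omega) (hu.symm.trans hfu.symm)
  have e3 : fireIterK n c f s2 u
      = fireIterK n c f (s1 + 1) u + (s2 - (s1 + 1)) := by
    have := fireIter_add n c f u (s1 + 1) (s2 - (s1 + 1)) hmid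
    rwa [show s1 + 1 + (s2 - (s1 + 1)) = s2 by omega] at this
  have hV3 : n - 1 ≤ fireIterK n c f s2 u := by
    have := hleg s2
    rwa [← heq] at this
  have hcu : c u ≤ n - 1 := hc u
  omega

/-- If `c` is a volatile configuration of `K_n` with `c(v) ≤ n-1` for all `v`,
then there is an ordering `v₁,…,v_n` of the vertices with `c(v_i) ≥ n - i`
(0-indexed: `c (σ i) ≥ n - 1 - i`). -/
theorem stmt4 (n : ℕ) (c : Fin n → ℕ) (hc : ∀ v, c v ≤ n - 1) (hvol : VolatileK n c) :
    ∃ σ : Equiv.Perm (Fin n), ∀ i : Fin n, n - 1 - (i : ℕ) ≤ c (σ i) := by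
  obtain ⟨f, hleg⟩ := hvol
  -- every vertex eventually fires
  have hexists : ∀ v : Fin n, ∃ s, f s = v := by
    intro v
    by_contra hne
    push_neg at hne
    have hinj : Function.Injective f := by
      intro a b hab
      by_contra hne'
      rcases Nat.lt_or_ge a b with h | h
      · exact keyA n c f hc hleg b v (fun s _ => hne s) a h hab
      · exact keyA n c f hc hleg a v (fun s _ => hne s) b (by omega) hab.symm
    obtain ⟨a, b, hab, hfab⟩ := Finite.exists_ne_map_eq_of_infinite f
    exact hab (hinj hfab)
  -- first firing time
  let τ : Fin n → ℕ := fun v => Nat.find (hexists v)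
  have hτ : ∀ v, f (τ v) = v := fun v => Nat.find_spec (hexists v)
  have hτ_min : ∀ v s, s < τ v → f s ≠ v := fun v s hs => Nat.find_min (hexists v) hs
  have hτinj : Function.Injective τ := by
    intro a b hab
    have := hτ a
    rw [hab, hτ b] at this
    exact this.symm
  refine ⟨Tuple.sort τ, fun k => ?_⟩
  set σ := Tuple.sort τ with hσ
  have hmono : StrictMono (τ ∘ σ) :=
    (Tuple.monotone_sort τ).strictMono_of_injective (hτinj.comp σ.injective)
  -- τ (σ k) ≤ k
  have hτk : τ (σ k) ≤ (k : ℕ) := by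
    have h1 : (Finset.range (τ (σ k))).card ≤ (Finset.Iio k).card := by
      apply Finset.card_le_card_of_injOn (fun s => σ.symm (f s))
      · intro s hs
        simp only [Finset.mem_coe, Finset.mem_range] at hs
        simp only [Finset.mem_coe, Finset.mem_Iio]
        have h2 : τ (f s) ≤ s := Nat.find_min' (hexists (f s)) rfl
        have h3 : τ (σ (σ.symm (f s))) < τ (σ k) := by
          rw [Equiv.apply_symm_apply]; omega
        exact hmono.lt_iff_lt.mp h3
      · intro a ha b hb hab
        simp only [Finset.coe_range, Set.mem_Iio] at ha hb
        have hfab : f a = f b := by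
          have := congrArg σ hab
          simpa using this
        by_contra hne
        rcases Nat.lt_or_ge a b with h | h
        · exact keyA n c f hc hleg b (σ k)
            (fun s hs => hτ_min (σ k) s (by omega)) a h hfab
        · exact keyA n c f hc hleg a (σ k)
            (fun s hs => hτ_min (σ k) s (by omega)) b (by omega) hfab.symm
    simpa [Fin.card_Iio] using h1
  -- chip count of σ k at its first firing
  have e1 : fireIterK n c f (τ (σ k)) (σ k) = c (σ k) + τ (σ k) := by
    have := fireIter_add n c f (σ k) 0 (τ (σ k))
      (fun s _ hs => hτ_min (σ k) s (by omega))
    simpa [fireIterK] using this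
  have hV : n - 1 ≤ fireIterK n c f (τ (σ k)) (σ k) := by
    have := hleg (τ (σ k))
    rwa [hτ (σ k)] at this
  omega
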